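/- arXiv:2508.04081 — 3 statements merged into one kernel-verified Lean document; each statement's English description precedes it below -/
import Mathlib

section
/- The pfaffian of the Tutte matrix is the signed generating polynomial of perfect matchings: for a finite simple graph G = (V, E) with |V| even, pf T(G) = Σ_M ε_M · Π_{e ∈ M} x_e, where the sum ranges over all perfect matchings M of G and each ε_M ∈ {+1, −1}. In particular, the monomials appearing in pf T(G) with nonzero coefficient are exactly the products Π_{e ∈ M} x_e over perfect matchings M, each with coefficient ±1. -/
open scoped Classical

/-- The index `2i` (0-based), corresponding to `2i - 1` in 1-based notation. -/
def evenIdx {m : ℕ} (i : Fin m) : Fin (2 * m) := ⟨2 * i.val, by have := i.isLt; omega⟩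

/-- The index `2i + 1` (0-based), corresponding to `2i` in 1-based notation. -/
def oddIdx {m : ℕ} (i : Fin m) : Fin (2 * m) := ⟨2 * i.val + 1, by have := i.isLt; omega⟩

/-- The pfaffian of a `2m × 2m` matrix: the sum over all permutations `σ` of
`{0, …, 2m-1}` satisfying `σ(0) < σ(2) < ⋯ < σ(2m-2)` and `σ(2i) < σ(2i+1)` for each `i`
of `sgn(σ) · Π_i A_{σ(2i), σ(2i+1)}`. -/
noncomputable def pfaffian {R : Type} [CommRing R] {m : ℕ}
    (A : Matrix (Fin (2 * m)) (Fin (2 * m)) R) : R :=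
  ∑ σ ∈ Finset.univ.filter (fun σ : Equiv.Perm (Fin (2 * m)) =>
      (∀ i : Fin m, σ (evenIdx i) < σ (oddIdx i)) ∧
      StrictMono fun i : Fin m => σ (evenIdx i)),
    (Equiv.Perm.sign σ : ℤ) • ∏ i : Fin m, A (σ (evenIdx i)) (σ (oddIdx i))

/-- The Tutte matrix of a simple graph `G` on `Fin n`, over `F[X_E]`. -/
noncomputable def tutteMatrix (F : Type) [Field F] {n : ℕ} (G : SimpleGraph (Fin n)) :
    Matrix (Fin n) (Fin n) (MvPolynomial (Sym2 (Fin n)) F) :=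
  fun u v =>
    if G.Adj u v then
      (if u < v then MvPolynomial.X s(u, v) else - MvPolynomial.X s(u, v))
    else 0

/-- `M` is (the edge set of) a perfect matching of `G`: a set of pairwise vertex-disjoint
edges of `G` covering every vertex. -/
def IsPerfectMatchingEdgeSet {n : ℕ} (G : SimpleGraph (Fin n))
    (M : Finset (Sym2 (Fin n))) : Prop :=
  ↑M ⊆ G.edgeSet ∧
  ((↑M : Set (Sym2 (Fin n))).Pairwise fun e f => ∀ v, v ∈ e → v ∉ f) ∧
  ∀ v : Fin n, ∃ e ∈ M, v ∈ e

namespace TPf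

lemma sorted_eq {α : Type*} [LinearOrder α] {a b c d : α} (hab : a < b) (hcd : c < d)
    (h : s(a, b) = s(c, d)) : a = c ∧ b = d := by
  rw [Sym2.eq_iff] at h
  rcases h with ⟨rfl, rfl⟩ | ⟨rfl, rfl⟩
  · exact ⟨rfl, rfl⟩
  · exact (lt_asymm hab hcd).elim

lemma mk_inf_sup {α : Type*} [LinearOrder α] (e : Sym2 α) : s(e.inf, e.sup) = e := by
  induction e using Sym2.ind with
  | _ a b =>
    rcases le_total a b with h | h
    · simp [min_eq_left h, max_eq_right h]
    · rw [Sym2.inf_mk, Sym2.sup_mk, min_eq_right h, max_eq_left h,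
        Sym2.eq_swap]

lemma inf_mem {α : Type*} [LinearOrder α] (e : Sym2 α) : e.inf ∈ e := by
  induction e using Sym2.ind with
  | _ a b =>
    rw [Sym2.inf_mk]
    rcases le_total a b with h | h <;> simp [min_eq_left, min_eq_right, h]

lemma sup_mem {α : Type*} [LinearOrder α] (e : Sym2 α) : e.sup ∈ e := by
  induction e using Sym2.ind with
  | _ a b =>
    rw [Sym2.sup_mk]
    rcases le_total a b with h | h <;> simp [max_eq_left, max_eq_right, h]

lemma inf_lt_sup {α : Type*} [LinearOrder α] {e : Sym2 α} (h : ¬ e.IsDiag) :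
    e.inf < e.sup := by
  refine lt_of_le_of_ne (Sym2.inf_le_sup e) fun heq => h ?_
  rw [← mk_inf_sup e, heq]
  exact Sym2.mk_isDiag_iff.mpr rfl

lemma idx_cases {m : ℕ} (x : Fin (2 * m)) :
    (∃ i : Fin m, x = evenIdx i) ∨ ∃ i : Fin m, x = oddIdx i := by
  have hx := x.isLt
  by_cases h : x.val % 2 = 0
  · exact Or.inl ⟨⟨x.val / 2, by omega⟩, Fin.ext (by simp [evenIdx]; omega)⟩
  · exact Or.inr ⟨⟨x.val / 2, by omega⟩, Fin.ext (by simp [oddIdx]; omega)⟩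

lemma evenIdx_inj {m : ℕ} {i j : Fin m} (h : evenIdx i = evenIdx j) : i = j := by
  simp [evenIdx, Fin.ext_iff] at h ⊢; omega

lemma evenIdx_ne_oddIdx {m : ℕ} (i j : Fin m) : evenIdx i ≠ oddIdx j := by
  simp [evenIdx, oddIdx, Fin.ext_iff]; omega

lemma oddIdx_inj {m : ℕ} {i j : Fin m} (h : oddIdx i = oddIdx j) : i = j := by
  simp [oddIdx, Fin.ext_iff] at h ⊢; omega

/-- The matching associated to a permutation. -/
noncomputable def fE {m : ℕ} (σ : Equiv.Perm (Fin (2 * m))) : Finset (Sym2 (Fin (2 * m))) :=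
  Finset.image (fun i : Fin m => s(σ (evenIdx i), σ (oddIdx i))) Finset.univ

end TPf


namespace TPf

variable {m : ℕ}

lemma fE_inj {σ τ : Equiv.Perm (Fin (2 * m))}
    (hσ1 : ∀ i : Fin m, σ (evenIdx i) < σ (oddIdx i))
    (hσ2 : StrictMono fun i : Fin m => σ (evenIdx i))
    (hτ1 : ∀ i : Fin m, τ (evenIdx i) < τ (oddIdx i))
    (hτ2 : StrictMono fun i : Fin m => τ (evenIdx i))
    (h : fE σ = fE τ) : σ = τ := by
  -- each edge of fE σ appears in fE τ with matching endpoints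
  have key : ∀ i : Fin m, ∃ j : Fin m,
      σ (evenIdx i) = τ (evenIdx j) ∧ σ (oddIdx i) = τ (oddIdx j) := by
    intro i
    have : s(σ (evenIdx i), σ (oddIdx i)) ∈ fE τ := by
      rw [← h]
      exact Finset.mem_image.mpr ⟨i, Finset.mem_univ _, rfl⟩
    obtain ⟨j, _, hj⟩ := Finset.mem_image.mp this
    exact ⟨j, (sorted_eq (hσ1 i) (hτ1 j) hj.symm)⟩
  have key' : ∀ i : Fin m, ∃ j : Fin m,
      τ (evenIdx i) = σ (evenIdx j) ∧ τ (oddIdx i) = σ (oddIdx j) := by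
    intro i
    have : s(τ (evenIdx i), τ (oddIdx i)) ∈ fE σ := by
      rw [h]
      exact Finset.mem_image.mpr ⟨i, Finset.mem_univ _, rfl⟩
    obtain ⟨j, _, hj⟩ := Finset.mem_image.mp this
    exact ⟨j, (sorted_eq (hτ1 i) (hσ1 j) hj.symm)⟩
  have hrange : (Set.range fun i : Fin m => σ (evenIdx i)) =
      Set.range fun i : Fin m => τ (evenIdx i) := by
    apply Set.eq_of_subset_of_subset
    · rintro x ⟨i, rfl⟩
      obtain ⟨j, hj, -⟩ := key i
      exact ⟨j, hj.symm⟩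
    · rintro x ⟨i, rfl⟩
      obtain ⟨j, hj, -⟩ := key' i
      exact ⟨j, hj.symm⟩
  have heven : (fun i : Fin m => σ (evenIdx i)) = fun i => τ (evenIdx i) := by
    haveI : WellFoundedLT (Fin m) := Finite.to_wellFoundedLT
    exact (StrictMono.range_inj hσ2 hτ2).mp hrange
  have hodd : ∀ i : Fin m, σ (oddIdx i) = τ (oddIdx i) := by
    intro i
    obtain ⟨j, hj1, hj2⟩ := key i
    have : τ (evenIdx j) = τ (evenIdx i) := by
      rw [← hj1]; exact congrFun heven i
    have hji : j = i := hτ2.injective this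
    rw [hj2, hji]
  apply Equiv.ext; intro x
  rcases idx_cases x with ⟨i, rfl⟩ | ⟨i, rfl⟩
  · exact congrFun heven i
  · exact hodd i

lemma fE_pm {G : SimpleGraph (Fin (2 * m))} {σ : Equiv.Perm (Fin (2 * m))}
    (hadj : ∀ i : Fin m, G.Adj (σ (evenIdx i)) (σ (oddIdx i))) :
    IsPerfectMatchingEdgeSet G (fE σ) := by
  refine ⟨?_, ?_, ?_⟩
  · intro e he
    obtain ⟨i, -, rfl⟩ := Finset.mem_image.mp he
    exact (hadj i)
  · intro e he f hf hne v hve hvf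
    obtain ⟨i, -, rfl⟩ := Finset.mem_image.mp he
    obtain ⟨j, -, rfl⟩ := Finset.mem_image.mp hf
    rw [Sym2.mem_iff] at hve hvf
    have hij : i ≠ j := fun hij => hne (by rw [hij])
    rcases hve with rfl | rfl <;> rcases hvf with h | h <;>
      [ exact hij (evenIdx_inj (σ.injective h));
        exact evenIdx_ne_oddIdx i j (σ.injective h);
        exact evenIdx_ne_oddIdx j i (σ.injective h.symm);
        exact hij (oddIdx_inj (σ.injective h)) ]
  · intro v
    rcases idx_cases (σ.symm v) with ⟨i, hi⟩ | ⟨i, hi⟩ <;>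
      refine ⟨s(σ (evenIdx i), σ (oddIdx i)),
        Finset.mem_image.mpr ⟨i, Finset.mem_univ _, rfl⟩, ?_⟩
    · rw [show v = σ (evenIdx i) by rw [← hi, Equiv.apply_symm_apply]]
      exact Sym2.mem_mk_left _ _
    · rw [show v = σ (oddIdx i) by rw [← hi, Equiv.apply_symm_apply]]
      exact Sym2.mem_mk_right _ _

end TPf

namespace TPf

set_option maxHeartbeats 2000000 in
lemma exists_perm {m : ℕ} {G : SimpleGraph (Fin (2 * m))} {M : Finset (Sym2 (Fin (2 * m)))}
    (hM : IsPerfectMatchingEdgeSet G M) :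
    ∃ σ : Equiv.Perm (Fin (2 * m)),
      (∀ i : Fin m, σ (evenIdx i) < σ (oddIdx i)) ∧
      (StrictMono fun i : Fin m => σ (evenIdx i)) ∧
      (∀ i : Fin m, G.Adj (σ (evenIdx i)) (σ (oddIdx i))) ∧
      fE σ = M := by
  classical
  obtain ⟨hsub, hdisj, hcov⟩ := hM
  have hnd : ∀ e ∈ M, ¬ e.IsDiag := fun e he => G.not_isDiag_of_mem_edgeSet (hsub he)
  have hinflt : ∀ e ∈ M, e.inf < e.sup := fun e he => inf_lt_sup (hnd e he)
  have huniq : ∀ v : Fin (2 * m), ∀ e ∈ M, ∀ f ∈ M, v ∈ e → v ∈ f → e = f := by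
    intro v e he f hf hve hvf
    by_contra hne
    exact hdisj he hf hne v hve hvf
  have hcard : M.card = m := by
    have hfib := Finset.card_eq_sum_card_fiberwise (f := fun v => (hcov v).choose)
      (s := (Finset.univ : Finset (Fin (2 * m)))) (t := M)
      (fun v _ => (hcov v).choose_spec.1)
    have h2 : ∀ e ∈ M, (Finset.univ.filter fun v => (hcov v).choose = e).card = 2 := by
      intro e he
      have hfil : (Finset.univ.filter fun v => (hcov v).choose = e) = {e.inf, e.sup} := by
        ext v
        simp only [Finset.mem_filter, Finset.mem_univ, true_and, Finset.mem_insert,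
          Finset.mem_singleton]
        constructor
        · rintro rfl
          have hv : v ∈ (hcov v).choose := (hcov v).choose_spec.2
          rw [← mk_inf_sup ((hcov v).choose)] at hv
          exact Sym2.mem_iff.mp hv
        · intro hv
          apply huniq v (hcov v).choose (hcov v).choose_spec.1 e he (hcov v).choose_spec.2
          rcases hv with rfl | rfl
          exacts [inf_mem e, sup_mem e]
      rw [hfil, Finset.card_insert_of_notMem (by simp [(hinflt e he).ne]),
        Finset.card_singleton]
    rw [Finset.sum_congr rfl h2, Finset.sum_const, smul_eq_mul, Finset.card_univ,
      Fintype.card_fin] at hfib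
    omega
  have hinfinj : Set.InjOn Sym2.inf (↑M : Set (Sym2 (Fin (2 * m)))) := by
    intro e he f hf h
    by_contra hne
    exact hdisj he hf hne e.inf (inf_mem e) (h ▸ inf_mem f)
  set N : Finset (Fin (2 * m)) := M.image Sym2.inf with hN
  have hNcard : N.card = m := by rw [hN, Finset.card_image_of_injOn hinfinj, hcard]
  set a : Fin m → Fin (2 * m) := fun i => N.orderEmbOfFin hNcard i with ha
  have haN : ∀ i, a i ∈ N := fun i => N.orderEmbOfFin_mem hNcard i
  have hEex : ∀ i : Fin m, ∃ e, e ∈ M ∧ e.inf = a i := by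
    intro i
    obtain ⟨e, he, hei⟩ := Finset.mem_image.mp (haN i)
    exact ⟨e, he, hei⟩
  set E : Fin m → Sym2 (Fin (2 * m)) := fun i => (hEex i).choose with hE
  have hEM : ∀ i, E i ∈ M := fun i => (hEex i).choose_spec.1
  have hEinf : ∀ i, (E i).inf = a i := fun i => (hEex i).choose_spec.2
  set b : Fin m → Fin (2 * m) := fun i => (E i).sup with hb
  have hab : ∀ i, a i < b i := by
    intro i
    have := hinflt (E i) (hEM i)
    rwa [hEinf i] at this
  have hEab : ∀ i, E i = s(a i, b i) := by
    intro i
    rw [← hEinf i]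
    exact (mk_inf_sup (E i)).symm
  have haE : ∀ i, a i ∈ E i := fun i => by rw [hEab i]; exact Sym2.mem_mk_left _ _
  have hbE : ∀ i, b i ∈ E i := fun i => by rw [hEab i]; exact Sym2.mem_mk_right _ _
  have hainj : Function.Injective a := (N.orderEmbOfFin hNcard).injective
  have hamono : StrictMono a := (N.orderEmbOfFin hNcard).strictMono
  have hEinj : Function.Injective E := fun i j h => hainj (by rw [← hEinf i, ← hEinf j, h])
  set g : Fin (2 * m) → Fin (2 * m) := fun x =>
    if x.val % 2 = 0 then a ⟨x.val / 2, by have := x.isLt; omega⟩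
    else b ⟨x.val / 2, by have := x.isLt; omega⟩ with hg
  have hginj : Function.Injective g := by
    intro x y hxy
    by_cases hx : x.val % 2 = 0 <;> by_cases hy : y.val % 2 = 0
    · rw [hg] at hxy; simp only [if_pos hx, if_pos hy] at hxy
      have := hainj hxy
      rw [Fin.mk.injEq] at this
      exact Fin.ext (by omega)
    · rw [hg] at hxy; simp only [if_pos hx, if_neg hy] at hxy
      exfalso
      have hmem := hbE ⟨y.val / 2, by have := y.isLt; omega⟩
      rw [← hxy] at hmem
      have hEe := huniq _ _ (hEM ⟨x.val / 2, by have := x.isLt; omega⟩) _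
        (hEM ⟨y.val / 2, by have := y.isLt; omega⟩) (haE _) hmem
      have h1 := congrArg Sym2.inf hEe
      rw [hEinf, hEinf] at h1
      rw [h1] at hxy
      exact absurd hxy (hab _).ne
    · rw [hg] at hxy; simp only [if_neg hx, if_pos hy] at hxy
      exfalso
      have hmem := hbE ⟨x.val / 2, by have := x.isLt; omega⟩
      rw [hxy] at hmem
      have hEe := huniq _ _ (hEM ⟨y.val / 2, by have := y.isLt; omega⟩) _
        (hEM ⟨x.val / 2, by have := x.isLt; omega⟩) (haE _) hmem
      have h1 := congrArg Sym2.inf hEe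
      rw [hEinf, hEinf] at h1
      rw [h1] at hxy
      exact absurd hxy.symm (hab _).ne
    · rw [hg] at hxy; simp only [if_neg hx, if_neg hy] at hxy
      have hmem := hbE ⟨y.val / 2, by have := y.isLt; omega⟩
      rw [← hxy] at hmem
      have hEe := huniq _ _ (hEM ⟨x.val / 2, by have := x.isLt; omega⟩) _
        (hEM ⟨y.val / 2, by have := y.isLt; omega⟩) (hbE _) hmem
      have := hEinj hEe
      rw [Fin.mk.injEq] at this
      exact Fin.ext (by omega)
  have hgbij : Function.Bijective g := Finite.injective_iff_bijective.mp hginj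
  set σ : Equiv.Perm (Fin (2 * m)) := Equiv.ofBijective g hgbij with hσ
  have hσe : ∀ i : Fin m, σ (evenIdx i) = a i := by
    intro i
    show g (evenIdx i) = a i
    have h0 : (evenIdx i).val % 2 = 0 := by simp [evenIdx]
    simp only [hg]
    rw [if_pos h0]
    congr 1
    exact Fin.ext (show 2 * i.val / 2 = i.val by omega)
  have hσo : ∀ i : Fin m, σ (oddIdx i) = b i := by
    intro i
    show g (oddIdx i) = b i
    have h0 : ¬ ((oddIdx i).val % 2 = 0) := by simp [oddIdx]
    simp only [hg]
    rw [if_neg h0]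
    congr 1
    exact Fin.ext (show (2 * i.val + 1) / 2 = i.val by omega)
  refine ⟨σ, ?_, ?_, ?_, ?_⟩
  · intro i; rw [hσe, hσo]; exact hab i
  · have : (fun i : Fin m => σ (evenIdx i)) = a := funext hσe
    rw [this]; exact hamono
  · intro i
    rw [hσe, hσo]
    have := hsub (hEM i)
    rw [hEab i] at this
    exact this
  · have himg : fE σ = Finset.image E Finset.univ := by
      unfold fE
      apply Finset.image_congr
      intro i _
      show s(σ (evenIdx i), σ (oddIdx i)) = E i
      rw [hσe, hσo, ← hEab]
    rw [himg]
    apply Finset.eq_of_subset_of_card_le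
    · intro e he
      obtain ⟨i, -, rfl⟩ := Finset.mem_image.mp he
      exact hEM i
    · rw [Finset.card_image_of_injective _ hEinj, Finset.card_univ, Fintype.card_fin, hcard]

end TPf

set_option maxHeartbeats 1000000 in
/-- The pfaffian of the Tutte matrix is the signed generating polynomial of perfect
matchings: `pf T(G) = Σ_M ε_M Π_{e ∈ M} x_e`, summed over the perfect matchings `M`
of `G`, with each `ε_M ∈ {+1, -1}`. -/
theorem pfaffian_tutteMatrix_eq_sum_perfect_matchings
    (F : Type) [Field F] (m : ℕ) (G : SimpleGraph (Fin (2 * m))) :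
    ∃ ε : Finset (Sym2 (Fin (2 * m))) → ℤ,
      (∀ M, IsPerfectMatchingEdgeSet G M → ε M = 1 ∨ ε M = -1) ∧
      pfaffian (tutteMatrix F G) =
        ∑ M ∈ Finset.univ.filter
            (fun M : Finset (Sym2 (Fin (2 * m))) => IsPerfectMatchingEdgeSet G M),
          (ε M : MvPolynomial (Sym2 (Fin (2 * m))) F) * ∏ e ∈ M, MvPolynomial.X e := by
  classical
  set S' : Finset (Equiv.Perm (Fin (2 * m))) :=
    (Finset.univ.filter (fun σ : Equiv.Perm (Fin (2 * m)) =>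
      (∀ i : Fin m, σ (evenIdx i) < σ (oddIdx i)) ∧
      StrictMono fun i : Fin m => σ (evenIdx i))).filter
      (fun σ => ∀ i : Fin m, G.Adj (σ (evenIdx i)) (σ (oddIdx i))) with hS'
  have hmemS' : ∀ σ, σ ∈ S' ↔ (((∀ i : Fin m, σ (evenIdx i) < σ (oddIdx i)) ∧
      StrictMono fun i : Fin m => σ (evenIdx i)) ∧
      ∀ i : Fin m, G.Adj (σ (evenIdx i)) (σ (oddIdx i))) := by
    intro σ
    rw [hS', Finset.mem_filter, Finset.mem_filter]
    simp only [Finset.mem_univ, true_and]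
  -- Step 1: restrict the pfaffian sum to permutations all of whose pairs are edges.
  have hstep1 : pfaffian (tutteMatrix F G) =
      ∑ σ ∈ S', (Equiv.Perm.sign σ : ℤ) •
        ∏ i : Fin m, tutteMatrix F G (σ (evenIdx i)) (σ (oddIdx i)) := by
    rw [pfaffian, hS']
    refine (Finset.sum_filter_of_ne ?_).symm
    intro σ hσ hne
    by_contra h
    apply hne
    obtain ⟨i, hi⟩ := not_forall.mp h
    have : tutteMatrix F G (σ (evenIdx i)) (σ (oddIdx i)) = 0 := by
      simp [tutteMatrix, hi]
    rw [Finset.prod_eq_zero (Finset.mem_univ i) this, smul_zero]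
  -- Step 2: on `S'`, rewrite each term as a signed product over the matching `fE σ`.
  have hstep2 : ∀ σ ∈ S', (Equiv.Perm.sign σ : ℤ) •
        ∏ i : Fin m, tutteMatrix F G (σ (evenIdx i)) (σ (oddIdx i)) =
      (Equiv.Perm.sign σ : ℤ) • ∏ e ∈ TPf.fE σ, MvPolynomial.X (R := F) e := by
    intro σ hσ
    obtain ⟨⟨hlt, hmono⟩, hadj⟩ := (hmemS' σ).mp hσ
    congr 1
    have h1 : ∀ i : Fin m, tutteMatrix F G (σ (evenIdx i)) (σ (oddIdx i)) =
        MvPolynomial.X s(σ (evenIdx i), σ (oddIdx i)) := by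
      intro i
      simp [tutteMatrix, hadj i, hlt i]
    rw [Finset.prod_congr rfl fun i _ => h1 i]
    rw [TPf.fE, Finset.prod_image]
    intro i _ j _ hij
    obtain ⟨h1', -⟩ := TPf.sorted_eq (hlt i) (hlt j) hij
    exact TPf.evenIdx_inj (σ.injective h1')
  refine ⟨fun M => if h : ∃ σ, σ ∈ S' ∧ TPf.fE σ = M then
      (Equiv.Perm.sign h.choose : ℤ) else 1, ?_, ?_⟩
  · intro M hM
    obtain ⟨σ, p1, p2, p3, p4⟩ := TPf.exists_perm hM
    have h : ∃ σ, σ ∈ S' ∧ TPf.fE σ = M := ⟨σ, (hmemS' σ).mpr ⟨⟨p1, p2⟩, p3⟩, p4⟩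
    simp only [dif_pos h]
    rcases Int.units_eq_one_or (Equiv.Perm.sign h.choose) with h1 | h1 <;> rw [h1] <;> simp
  · rw [hstep1, Finset.sum_congr rfl hstep2]
    refine Finset.sum_bij (fun σ _ => TPf.fE σ) ?_ ?_ ?_ ?_
    · intro σ hσ
      obtain ⟨⟨hlt, hmono⟩, hadj⟩ := (hmemS' σ).mp hσ
      exact Finset.mem_filter.mpr ⟨Finset.mem_univ _, TPf.fE_pm hadj⟩
    · intro σ hσ τ hτ h
      obtain ⟨⟨hlt, hmono⟩, -⟩ := (hmemS' σ).mp hσ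
      obtain ⟨⟨hlt', hmono'⟩, -⟩ := (hmemS' τ).mp hτ
      exact TPf.fE_inj hlt hmono hlt' hmono' h
    · intro M hM
      obtain ⟨σ, p1, p2, p3, p4⟩ := TPf.exists_perm (Finset.mem_filter.mp hM).2
      exact ⟨σ, (hmemS' σ).mpr ⟨⟨p1, p2⟩, p3⟩, p4⟩
    · intro σ hσ
      have h : ∃ τ, τ ∈ S' ∧ TPf.fE τ = TPf.fE σ := ⟨σ, hσ, rfl⟩
      simp only [dif_pos h]
      obtain ⟨⟨hlt, hmono⟩, -⟩ := (hmemS' σ).mp hσ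
      obtain ⟨⟨hlt', hmono'⟩, -⟩ := (hmemS' h.choose).mp h.choose_spec.1
      have hcs : h.choose = σ := TPf.fE_inj hlt' hmono' hlt hmono h.choose_spec.2
      rw [hcs, zsmul_eq_mul]
end

section
/- Pfaffian edge self-reduction: let G = (V, E) be a simple graph with |V| even, let e ∈ E, let G_e be the graph obtained from G by deleting the edge e, and let G^e be the graph obtained from G by deleting all edges that share an endpoint with e except e itself. Then, for any assignment of field values r_{e'} to the indeterminates x_{e'}, pf T̃(G) = pf T̃(G_e) + pf T̃(G^e), where T̃(H) denotes the Tutte matrix of H with each x_{e'} replaced by r_{e'}. -/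
open scoped Classical

/-- The Tutte matrix of a graph `H` on `Fin n` with the indeterminate of each edge `e'`
replaced by the field value `r e'` (sign according to the order of the endpoints). -/
noncomputable def tutteAux {R : Type} [CommRing R] {n : ℕ} (H : SimpleGraph (Fin n))
    (r : Sym2 (Fin n) → R) : Matrix (Fin n) (Fin n) R :=
  fun u v => if H.Adj u v then (if u < v then r s(u, v) else - r s(u, v)) else 0

lemma tutteAux_eq_zero {R : Type} [CommRing R] {n : ℕ} {H : SimpleGraph (Fin n)}
    (r : Sym2 (Fin n) → R) {u v : Fin n} (h : ¬ H.Adj u v) : tutteAux H r u v = 0 :=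
  if_neg h

lemma tutteAux_congr {R : Type} [CommRing R] {n : ℕ} {H H' : SimpleGraph (Fin n)}
    (r : Sym2 (Fin n) → R) {u v : Fin n} (h : H.Adj u v) (h' : H'.Adj u v) :
    tutteAux H r u v = tutteAux H' r u v := by
  simp only [tutteAux, if_pos h, if_pos h']

/-- Pfaffian edge self-reduction: for an edge `e` of `G`, with `G_e` the graph obtained by
deleting `e` and `G^e` the graph obtained by deleting all edges sharing an endpoint with
`e` except `e` itself, `pf T̃(G) = pf T̃(G_e) + pf T̃(G^e)` for any substitution
`r : E → F` of field values for the indeterminates. -/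
theorem pfaffian_edge_self_reduction (F : Type) [Field F] (m : ℕ)
    (G : SimpleGraph (Fin (2 * m))) (r : Sym2 (Fin (2 * m)) → F)
    (e : Sym2 (Fin (2 * m))) (he : e ∈ G.edgeSet) :
    pfaffian (tutteAux G r) =
      pfaffian (tutteAux (G.deleteEdges {e}) r) +
        pfaffian (tutteAux
          (G.deleteEdges {f | f ≠ e ∧ ∃ v : Fin (2 * m), v ∈ f ∧ v ∈ e}) r) := by
  unfold pfaffian
  rw [← Finset.sum_add_distrib]
  apply Finset.sum_congr rfl
  intro σ _
  rw [← smul_add]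
  congr 1
  set S : Set (Sym2 (Fin (2 * m))) :=
    {f | f ≠ e ∧ ∃ v : Fin (2 * m), v ∈ f ∧ v ∈ e} with hS
  set u : Fin m → Fin (2 * m) := fun i => σ (evenIdx i) with hu
  set v : Fin m → Fin (2 * m) := fun i => σ (oddIdx i) with hv
  -- disjointness of distinct pairs
  have hdisj : ∀ i j : Fin m, i ≠ j → ∀ x : Fin (2 * m),
      x ∈ s(u i, v i) → x ∉ s(u j, v j) := by
    intro i j hij x hxi hxj
    rw [Sym2.mem_iff] at hxi hxj
    rcases hxi with h1 | h1 <;> rcases hxj with h2 | h2 <;>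
      · have := σ.injective (h1.symm.trans h2)
        simp only [evenIdx, oddIdx, Fin.mk.injEq] at this
        apply hij
        exact Fin.ext (by omega)
  -- coverage
  have hcover : ∀ w : Fin (2 * m), ∃ i : Fin m, w = u i ∨ w = v i := by
    intro w
    set k := σ.symm w with hk
    have hkl := k.isLt
    refine ⟨⟨k.val / 2, by omega⟩, ?_⟩
    have hw : σ k = w := σ.apply_symm_apply w
    rcases Nat.even_or_odd k.val with hpar | hpar
    · left
      have : evenIdx (⟨k.val / 2, by omega⟩ : Fin m) = k := by
        apply Fin.ext
        simp only [evenIdx]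
        obtain ⟨t, ht⟩ := hpar
        omega
      show w = σ (evenIdx _)
      rw [this, hw]
    · right
      have : oddIdx (⟨k.val / 2, by omega⟩ : Fin m) = k := by
        apply Fin.ext
        simp only [oddIdx]
        obtain ⟨t, ht⟩ := hpar
        omega
      show w = σ (oddIdx _)
      rw [this, hw]
  by_cases hA : ∀ i, G.Adj (u i) (v i)
  · by_cases hB : ∃ j, s(u j, v j) = e
    · obtain ⟨j, hj⟩ := hB
      have h1 : ∏ i : Fin m, tutteAux (G.deleteEdges {e}) r (u i) (v i) = 0 := by
        apply Finset.prod_eq_zero (Finset.mem_univ j)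
        apply tutteAux_eq_zero
        rw [SimpleGraph.deleteEdges_adj]
        rintro ⟨-, hne⟩
        exact hne (by simp [hj])
      have h2 : ∏ i : Fin m, tutteAux G r (u i) (v i) =
          ∏ i : Fin m, tutteAux (G.deleteEdges S) r (u i) (v i) := by
        apply Finset.prod_congr rfl
        intro i _
        apply tutteAux_congr r (hA i)
        rw [SimpleGraph.deleteEdges_adj]
        refine ⟨hA i, ?_⟩
        rintro ⟨hne, w, hwf, hwe⟩
        by_cases hij : i = j
        · exact hne (hij ▸ hj)
        · exact hdisj i j hij w hwf (hj ▸ hwe)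
      rw [h1, h2, zero_add]
    · push_neg at hB
      have h1 : ∏ i : Fin m, tutteAux G r (u i) (v i) =
          ∏ i : Fin m, tutteAux (G.deleteEdges {e}) r (u i) (v i) := by
        apply Finset.prod_congr rfl
        intro i _
        apply tutteAux_congr r (hA i)
        rw [SimpleGraph.deleteEdges_adj]
        exact ⟨hA i, by simpa using hB i⟩
      have h2 : ∏ i : Fin m, tutteAux (G.deleteEdges S) r (u i) (v i) = 0 := by
        have ha : e.out.1 ∈ e := Sym2.out_fst_mem e
        set a := e.out.1
        obtain ⟨i, hi⟩ := hcover a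
        apply Finset.prod_eq_zero (Finset.mem_univ i)
        apply tutteAux_eq_zero
        rw [SimpleGraph.deleteEdges_adj]
        rintro ⟨-, hnotS⟩
        apply hnotS
        refine ⟨hB i, a, ?_, ha⟩
        rw [Sym2.mem_iff]
        tauto
      rw [h1, h2, add_zero]
  · push_neg at hA
    obtain ⟨i, hi⟩ := hA
    have z : ∀ H : SimpleGraph (Fin (2 * m)), (∀ p q, H.Adj p q → G.Adj p q) →
        ∏ k : Fin m, tutteAux H r (u k) (v k) = 0 := by
      intro H hH
      apply Finset.prod_eq_zero (Finset.mem_univ i)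
      apply tutteAux_eq_zero
      exact fun h => hi (hH _ _ h)
    rw [z G (fun _ _ h => h), z (G.deleteEdges {e})
        (fun p q h => (SimpleGraph.deleteEdges_adj.mp h).1),
      z (G.deleteEdges S) (fun p q h => (SimpleGraph.deleteEdges_adj.mp h).1)]
    ring
end

section
/- Pfaffian vertex self-reduction for the exact matching problem: let G₀ = (V, E₀) and G₁ = (V, E₁) be simple graphs on the same vertex set V with |V| even, fix a vertex v ∈ V, and let δ₀(v) and δ₁(v) denote the sets of edges of E₀ and of E₁, respectively, that are incident to v. Then, over F[y], pf T̃(G₀, G₁) = pf T̃(G₀ − δ₀(v), G₁) + pf T̃(G₀, G₁ − δ₁(v)), where Gᵢ − δᵢ(v) removes the indicated edges; in particular, for every k, [y^k] pf T̃(G₀, G₁) = [y^k] pf T̃(G₀ − δ₀(v), G₁) + [y^k] pf T̃(G₀, G₁ − δ₁(v)). -/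
open scoped Classical

/-- The substituted weighted Tutte matrix `T̃(H₀, H₁) = T̃(H₀) + y·T̃(H₁) ∈ F[y]^{V×V}`,
where `r₀ e` (resp. `r₁ e`) is the field value substituted for the indeterminate of the
edge `e` of `H₀` (resp. of `H₁`), and `y = Polynomial.X`. -/
noncomputable def substWeightedTutteMatrix (F : Type) [Field F] {n : ℕ}
    (H₀ H₁ : SimpleGraph (Fin n)) (r₀ r₁ : Sym2 (Fin n) → F) :
    Matrix (Fin n) (Fin n) (Polynomial F) :=
  tutteAux H₀ (fun e => Polynomial.C (r₀ e)) +
    (Polynomial.X : Polynomial F) • tutteAux H₁ (fun e => Polynomial.C (r₁ e))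

lemma tutteAux_delete_eq_zero {R : Type} [CommRing R] {n : ℕ} (H : SimpleGraph (Fin n))
    (r : Sym2 (Fin n) → R) (v u w : Fin n) (h : u = v ∨ w = v) :
    tutteAux (H.deleteEdges {f | v ∈ f}) r u w = 0 := by
  have hadj : ¬ (H.deleteEdges {f | v ∈ f}).Adj u w := by
    rw [SimpleGraph.deleteEdges_adj]
    rintro ⟨-, hmem⟩
    apply hmem
    simp only [Set.mem_setOf_eq, Sym2.mem_iff]
    rcases h with h | h
    · exact Or.inl h.symm
    · exact Or.inr h.symm
  unfold tutteAux
  rw [if_neg hadj]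

lemma tutteAux_delete_eq {R : Type} [CommRing R] {n : ℕ} (H : SimpleGraph (Fin n))
    (r : Sym2 (Fin n) → R) (v u w : Fin n) (hu : u ≠ v) (hw : w ≠ v) :
    tutteAux (H.deleteEdges {f | v ∈ f}) r u w = tutteAux H r u w := by
  have hadj : (H.deleteEdges {f | v ∈ f}).Adj u w ↔ H.Adj u w := by
    rw [SimpleGraph.deleteEdges_adj]
    constructor
    · exact fun h => h.1
    · intro h
      refine ⟨h, ?_⟩
      simp only [Set.mem_setOf_eq, Sym2.mem_iff]
      rintro (h | h)
      · exact hu h.symm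
      · exact hw h.symm
  simp only [tutteAux, hadj]

lemma subst_delete_eq₀ (F : Type) [Field F] {n : ℕ} (H₀ H₁ : SimpleGraph (Fin n))
    (r₀ r₁ : Sym2 (Fin n) → F) (v u w : Fin n) (hu : u ≠ v) (hw : w ≠ v) :
    substWeightedTutteMatrix F (H₀.deleteEdges {f | v ∈ f}) H₁ r₀ r₁ u w =
      substWeightedTutteMatrix F H₀ H₁ r₀ r₁ u w := by
  simp only [substWeightedTutteMatrix, Matrix.add_apply, Matrix.smul_apply,
    tutteAux_delete_eq H₀ _ v u w hu hw]

lemma subst_delete_eq₁ (F : Type) [Field F] {n : ℕ} (H₀ H₁ : SimpleGraph (Fin n))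
    (r₀ r₁ : Sym2 (Fin n) → F) (v u w : Fin n) (hu : u ≠ v) (hw : w ≠ v) :
    substWeightedTutteMatrix F H₀ (H₁.deleteEdges {f | v ∈ f}) r₀ r₁ u w =
      substWeightedTutteMatrix F H₀ H₁ r₀ r₁ u w := by
  simp only [substWeightedTutteMatrix, Matrix.add_apply, Matrix.smul_apply,
    tutteAux_delete_eq H₁ _ v u w hu hw]

lemma subst_delete_add (F : Type) [Field F] {n : ℕ} (H₀ H₁ : SimpleGraph (Fin n))
    (r₀ r₁ : Sym2 (Fin n) → F) (v u w : Fin n) (h : u = v ∨ w = v) :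
    substWeightedTutteMatrix F (H₀.deleteEdges {f | v ∈ f}) H₁ r₀ r₁ u w +
      substWeightedTutteMatrix F H₀ (H₁.deleteEdges {f | v ∈ f}) r₀ r₁ u w =
      substWeightedTutteMatrix F H₀ H₁ r₀ r₁ u w := by
  simp only [substWeightedTutteMatrix, Matrix.add_apply, Matrix.smul_apply,
    tutteAux_delete_eq_zero H₀ _ v u w h, tutteAux_delete_eq_zero H₁ _ v u w h,
    smul_zero, add_zero, zero_add]
  exact add_comm _ _

/-- Pfaffian vertex self-reduction for the exact matching problem: for a fixed vertex
`v`, deleting from `G₀` the weight-0 edges at `v`, resp. from `G₁` the weight-1 edges at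
`v`, we have `pf T̃(G₀, G₁) = pf T̃(G₀ − δ₀(v), G₁) + pf T̃(G₀, G₁ − δ₁(v))` over `F[y]`;
in particular the coefficients of `y^k` satisfy the same identity for every `k`. -/
theorem pfaffian_vertex_self_reduction (F : Type) [Field F] (m : ℕ)
    (G₀ G₁ : SimpleGraph (Fin (2 * m))) (r₀ r₁ : Sym2 (Fin (2 * m)) → F)
    (v : Fin (2 * m)) :
    (pfaffian (substWeightedTutteMatrix F G₀ G₁ r₀ r₁) =
        pfaffian (substWeightedTutteMatrix F (G₀.deleteEdges {f | v ∈ f}) G₁ r₀ r₁) +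
          pfaffian (substWeightedTutteMatrix F G₀ (G₁.deleteEdges {f | v ∈ f}) r₀ r₁)) ∧
      ∀ k : ℕ,
        (pfaffian (substWeightedTutteMatrix F G₀ G₁ r₀ r₁)).coeff k =
          (pfaffian
            (substWeightedTutteMatrix F (G₀.deleteEdges {f | v ∈ f}) G₁ r₀ r₁)).coeff k +
          (pfaffian
            (substWeightedTutteMatrix F G₀ (G₁.deleteEdges {f | v ∈ f}) r₀ r₁)).coeff k := by
  have main : pfaffian (substWeightedTutteMatrix F G₀ G₁ r₀ r₁) =
      pfaffian (substWeightedTutteMatrix F (G₀.deleteEdges {f | v ∈ f}) G₁ r₀ r₁) +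
        pfaffian (substWeightedTutteMatrix F G₀ (G₁.deleteEdges {f | v ∈ f}) r₀ r₁) := by
    unfold pfaffian
    rw [← Finset.sum_add_distrib]
    refine Finset.sum_congr rfl (fun σ _ => ?_)
    rw [← smul_add]
    congr 1
    set j : Fin (2 * m) := σ.symm v with hj
    obtain ⟨i₀, hi₀⟩ : ∃ i : Fin m, j = evenIdx i ∨ j = oddIdx i := by
      refine ⟨⟨j.val / 2, by have := j.isLt; omega⟩, ?_⟩
      rcases Nat.even_or_odd j.val with ⟨c, hc⟩ | ⟨c, hc⟩
      · left; apply Fin.ext; simp only [evenIdx]; omega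
      · right; apply Fin.ext; simp only [oddIdx]; omega
    have hσv : σ j = v := Equiv.apply_symm_apply σ v
    have hne : ∀ i : Fin m, i ≠ i₀ → σ (evenIdx i) ≠ v ∧ σ (oddIdx i) ≠ v := by
      intro i hi
      have hval : i.val ≠ i₀.val := fun h => hi (Fin.ext h)
      constructor
      · intro hc
        have : evenIdx i = j := by
          apply σ.injective; rw [hc, hσv]
        rcases hi₀ with h | h <;>
          · rw [h] at this
            have := congrArg Fin.val this
            simp only [evenIdx, oddIdx] at this
            omega
      · intro hc
        have : oddIdx i = j := by
          apply σ.injective; rw [hc, hσv]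
        rcases hi₀ with h | h <;>
          · rw [h] at this
            have := congrArg Fin.val this
            simp only [evenIdx, oddIdx] at this
            omega
    have hv : σ (evenIdx i₀) = v ∨ σ (oddIdx i₀) = v := by
      rcases hi₀ with h | h
      · left; rw [← h, hσv]
      · right; rw [← h, hσv]
    rw [← Finset.mul_prod_erase Finset.univ _ (Finset.mem_univ i₀),
      ← Finset.mul_prod_erase Finset.univ
        (fun i => substWeightedTutteMatrix F (G₀.deleteEdges {f | v ∈ f}) G₁ r₀ r₁
          (σ (evenIdx i)) (σ (oddIdx i))) (Finset.mem_univ i₀),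
      ← Finset.mul_prod_erase Finset.univ
        (fun i => substWeightedTutteMatrix F G₀ (G₁.deleteEdges {f | v ∈ f}) r₀ r₁
          (σ (evenIdx i)) (σ (oddIdx i))) (Finset.mem_univ i₀)]
    have hrest : ∀ {H₀' H₁' : SimpleGraph (Fin (2 * m))},
        (∀ (u w : Fin (2 * m)), u ≠ v → w ≠ v →
          substWeightedTutteMatrix F H₀' H₁' r₀ r₁ u w =
            substWeightedTutteMatrix F G₀ G₁ r₀ r₁ u w) →
        ∏ i ∈ Finset.univ.erase i₀,
          substWeightedTutteMatrix F H₀' H₁' r₀ r₁ (σ (evenIdx i)) (σ (oddIdx i)) =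
        ∏ i ∈ Finset.univ.erase i₀,
          substWeightedTutteMatrix F G₀ G₁ r₀ r₁ (σ (evenIdx i)) (σ (oddIdx i)) := by
      intro H₀' H₁' h
      refine Finset.prod_congr rfl (fun i hi => ?_)
      have hi' := Finset.ne_of_mem_erase hi
      exact h _ _ (hne i hi').1 (hne i hi').2
    rw [hrest (fun u w hu hw => subst_delete_eq₀ F G₀ G₁ r₀ r₁ v u w hu hw),
      hrest (fun u w hu hw => subst_delete_eq₁ F G₀ G₁ r₀ r₁ v u w hu hw),
      ← add_mul, subst_delete_add F G₀ G₁ r₀ r₁ v _ _ hv]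
  exact ⟨main, fun k => by rw [main, Polynomial.coeff_add]⟩
end
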